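/- Let S(K_6) be the subdivision graph of the complete graph K_6 (a graph on 6 + 15 = 21 vertices). Then the multiset of the 21 eigenvalues of the standard Laplacian of S(K_6) is exactly: 0 once, 1 − √(2/5) with multiplicity 5, 1 with multiplicity 9, 1 + √(2/5) with multiplicity 5, and 2 once. -/

import Mathlib

open scoped Classical

noncomputable section

/-- Degree of a vertex. -/
def deg {V : Type*} [Fintype V] (G : SimpleGraph V) (u : V) : ℕ :=
  Nat.card {v | G.Adj u v}

/-- Standard (normalised) Laplacian. -/
def stdLap {V : Type*} [Fintype V] (G : SimpleGraph V) : Matrix V V ℝ :=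
  fun u v =>
    if u = v then 1
    else if G.Adj u v then -(1 / Real.sqrt ((deg G u : ℝ) * (deg G v : ℝ)))
    else 0

/-- Signless standard Laplacian. -/
def stdLapP {V : Type*} [Fintype V] (G : SimpleGraph V) : Matrix V V ℝ :=
  fun u v =>
    if u = v then 1
    else if G.Adj u v then 1 / Real.sqrt ((deg G u : ℝ) * (deg G v : ℝ))
    else 0

/-- Spectrum (multiset of eigenvalues, with algebraic multiplicity). -/
def spec {V : Type*} [Fintype V] (G : SimpleGraph V) : Multiset ℝ :=
  (stdLap G).charpoly.roots

def specP {V : Type*} [Fintype V] (G : SimpleGraph V) : Multiset ℝ :=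
  (stdLapP G).charpoly.roots

/-- `eig G k` is the k-th smallest eigenvalue (1-based). -/
def eig {V : Type*} [Fintype V] (G : SimpleGraph V) (k : ℕ) : ℝ :=
  ((spec G).sort (· ≤ ·)).getD (k - 1) 0

def eigP {V : Type*} [Fintype V] (G : SimpleGraph V) (k : ℕ) : ℝ :=
  ((specP G).sort (· ≤ ·)).getD (k - 1) 0

end

/-- The subdivision graph `S(G)`: vertex set `V(G) ⊔ E(G)`, with `v : V(G)`
adjacent to `e : E(G)` iff `v` is an endpoint of `e`. -/
def subdiv {V : Type*} (G : SimpleGraph V) : SimpleGraph (V ⊕ G.edgeSet) where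
  Adj x y :=
    match x, y with
    | .inl v, .inr e => v ∈ (e : Sym2 V)
    | .inr e, .inl v => v ∈ (e : Sym2 V)
    | _, _ => False
  symm := ⟨by rintro (v | e) (w | f) h <;> exact h⟩
  loopless := ⟨by rintro (v | e) h <;> exact h⟩


set_option maxRecDepth 1000000
set_option maxHeartbeats 4000000

namespace Stmt17Aux

open Matrix

/-! ### Auxiliary integer matrices -/

def Amat : Matrix (Fin 21) (Fin 21) ℤ := Matrix.of ![
    ![0,0,0,0,0,0,1,1,1,1,1,0,0,0,0,0,0,0,0,0,0],
    ![0,0,0,0,0,0,1,0,0,0,0,1,1,1,1,0,0,0,0,0,0],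
    ![0,0,0,0,0,0,0,1,0,0,0,1,0,0,0,1,1,1,0,0,0],
    ![0,0,0,0,0,0,0,0,1,0,0,0,1,0,0,1,0,0,1,1,0],
    ![0,0,0,0,0,0,0,0,0,1,0,0,0,1,0,0,1,0,1,0,1],
    ![0,0,0,0,0,0,0,0,0,0,1,0,0,0,1,0,0,1,0,1,1],
    ![1,1,0,0,0,0,0,0,0,0,0,0,0,0,0,0,0,0,0,0,0],
    ![1,0,1,0,0,0,0,0,0,0,0,0,0,0,0,0,0,0,0,0,0],
    ![1,0,0,1,0,0,0,0,0,0,0,0,0,0,0,0,0,0,0,0,0],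
    ![1,0,0,0,1,0,0,0,0,0,0,0,0,0,0,0,0,0,0,0,0],
    ![1,0,0,0,0,1,0,0,0,0,0,0,0,0,0,0,0,0,0,0,0],
    ![0,1,1,0,0,0,0,0,0,0,0,0,0,0,0,0,0,0,0,0,0],
    ![0,1,0,1,0,0,0,0,0,0,0,0,0,0,0,0,0,0,0,0,0],
    ![0,1,0,0,1,0,0,0,0,0,0,0,0,0,0,0,0,0,0,0,0],
    ![0,1,0,0,0,1,0,0,0,0,0,0,0,0,0,0,0,0,0,0,0],
    ![0,0,1,1,0,0,0,0,0,0,0,0,0,0,0,0,0,0,0,0,0],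
    ![0,0,1,0,1,0,0,0,0,0,0,0,0,0,0,0,0,0,0,0,0],
    ![0,0,1,0,0,1,0,0,0,0,0,0,0,0,0,0,0,0,0,0,0],
    ![0,0,0,1,1,0,0,0,0,0,0,0,0,0,0,0,0,0,0,0,0],
    ![0,0,0,1,0,1,0,0,0,0,0,0,0,0,0,0,0,0,0,0,0],
    ![0,0,0,0,1,1,0,0,0,0,0,0,0,0,0,0,0,0,0,0,0]]

def Pz : Matrix (Fin 21) (Fin 21) ℤ := Matrix.of ![
    ![0,2,2,2,2,2,0,0,0,0,0,0,0,0,0,2,2,2,2,2,0],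
    ![0,-2,2,2,2,2,0,0,0,0,0,0,0,0,0,-2,2,2,2,2,0],
    ![0,0,-4,2,2,2,0,0,0,0,0,0,0,0,0,0,-4,2,2,2,0],
    ![0,0,0,-6,2,2,0,0,0,0,0,0,0,0,0,0,0,-6,2,2,0],
    ![0,0,0,0,-8,2,0,0,0,0,0,0,0,0,0,0,0,0,-8,2,0],
    ![0,0,0,0,0,-10,0,0,0,0,0,0,0,0,0,0,0,0,0,-10,0],
    ![2,0,2,2,2,2,0,0,0,2,2,2,1,2,2,0,-2,-2,-2,-2,-2],
    ![2,1,-1,2,2,2,1,1,1,-1,-1,-1,1,2,2,-1,1,-2,-2,-2,-2],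
    ![2,1,1,-2,2,2,-1,1,1,-1,1,1,-1,-2,2,-1,-1,2,-2,-2,-2],
    ![2,1,1,1,-3,2,0,-2,1,0,-2,1,-1,1,-3,-1,-1,-1,3,-2,-2],
    ![2,1,1,1,1,-4,0,0,-3,0,0,-3,0,-3,-3,-1,-1,-1,-1,4,-2],
    ![2,-1,-1,2,2,2,-1,-1,-1,-1,-1,-1,1,2,2,1,1,-2,-2,-2,-2],
    ![2,-1,1,-2,2,2,1,-1,-1,-1,1,1,-1,-2,2,1,-1,2,-2,-2,-2],
    ![2,-1,1,1,-3,2,0,2,-1,0,-2,1,-1,1,-3,1,-1,-1,3,-2,-2],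
    ![2,-1,1,1,1,-4,0,0,3,0,0,-3,0,-3,-3,1,-1,-1,-1,4,-2],
    ![2,0,-2,-2,2,2,0,0,0,2,-2,-2,-1,-2,2,0,2,2,-2,-2,-2],
    ![2,0,-2,1,-3,2,0,0,0,0,4,-2,-1,1,-3,0,2,-1,3,-2,-2],
    ![2,0,-2,1,1,-4,0,0,0,0,0,6,0,-3,-3,0,2,-1,-1,4,-2],
    ![2,0,0,-3,-3,2,0,0,0,0,0,0,3,-3,-3,0,0,3,3,-2,-2],
    ![2,0,0,-3,1,-4,0,0,0,0,0,0,0,9,-3,0,0,3,-1,4,-2],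
    ![2,0,0,0,-4,-4,0,0,0,0,0,0,0,0,12,0,0,0,4,4,-2]]

def Po : Matrix (Fin 21) (Fin 21) ℤ := Matrix.of ![
    ![1,0,0,0,0,0,0,0,0,0,0,0,0,0,0,0,0,0,0,0,1],
    ![1,0,0,0,0,0,0,0,0,0,0,0,0,0,0,0,0,0,0,0,1],
    ![1,0,0,0,0,0,0,0,0,0,0,0,0,0,0,0,0,0,0,0,1],
    ![1,0,0,0,0,0,0,0,0,0,0,0,0,0,0,0,0,0,0,0,1],
    ![1,0,0,0,0,0,0,0,0,0,0,0,0,0,0,0,0,0,0,0,1],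
    ![1,0,0,0,0,0,0,0,0,0,0,0,0,0,0,0,0,0,0,0,1],
    ![0,0,0,0,0,0,0,0,0,0,0,0,0,0,0,0,0,0,0,0,0],
    ![0,0,0,0,0,0,0,0,0,0,0,0,0,0,0,0,0,0,0,0,0],
    ![0,0,0,0,0,0,0,0,0,0,0,0,0,0,0,0,0,0,0,0,0],
    ![0,0,0,0,0,0,0,0,0,0,0,0,0,0,0,0,0,0,0,0,0],
    ![0,0,0,0,0,0,0,0,0,0,0,0,0,0,0,0,0,0,0,0,0],
    ![0,0,0,0,0,0,0,0,0,0,0,0,0,0,0,0,0,0,0,0,0],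
    ![0,0,0,0,0,0,0,0,0,0,0,0,0,0,0,0,0,0,0,0,0],
    ![0,0,0,0,0,0,0,0,0,0,0,0,0,0,0,0,0,0,0,0,0],
    ![0,0,0,0,0,0,0,0,0,0,0,0,0,0,0,0,0,0,0,0,0],
    ![0,0,0,0,0,0,0,0,0,0,0,0,0,0,0,0,0,0,0,0,0],
    ![0,0,0,0,0,0,0,0,0,0,0,0,0,0,0,0,0,0,0,0,0],
    ![0,0,0,0,0,0,0,0,0,0,0,0,0,0,0,0,0,0,0,0,0],
    ![0,0,0,0,0,0,0,0,0,0,0,0,0,0,0,0,0,0,0,0,0],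
    ![0,0,0,0,0,0,0,0,0,0,0,0,0,0,0,0,0,0,0,0,0],
    ![0,0,0,0,0,0,0,0,0,0,0,0,0,0,0,0,0,0,0,0,0]]

def D0 : Fin 21 → ℤ := fun i =>
  if i.1 = 0 then 0 else if i.1 ≤ 5 then 2 else if i.1 ≤ 14 then 0
  else if i.1 ≤ 19 then -2 else 0

def D1 : Fin 21 → ℤ := fun i => if i.1 = 0 then 1 else if i.1 ≤ 19 then 0 else -1

def Nvec : Fin 21 → ℤ := fun i =>
  ![120, 16, 48, 96, 160, 240, 4, 12, 24, 12, 36, 72, 18, 144, 240, 16, 48, 96, 160, 240, 120] i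

/-! ### The graph `G21` on `Fin 21` and its identification with `subdiv ⊤` -/

def G21 : SimpleGraph (Fin 21) where
  Adj i j := Amat i j = 1
  symm := ⟨fun i j h => (by intro i; fin_cases i <;> decide : ∀ i j : Fin 21, Amat i j = 1 → Amat j i = 1) i j h⟩
  loopless := ⟨fun i h => absurd h ((by decide : ∀ i : Fin 21, ¬ Amat i i = 1) i)⟩

instance : DecidableRel G21.Adj := fun i j => inferInstanceAs (Decidable (Amat i j = 1))

instance : DecidableRel (subdiv (⊤ : SimpleGraph (Fin 6))).Adj := fun x y =>
  match x, y with
  | .inl _, .inl _ => .isFalse fun h => h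
  | .inl v, .inr e => inferInstanceAs (Decidable (v ∈ (e : Sym2 (Fin 6))))
  | .inr e, .inl v => inferInstanceAs (Decidable (v ∈ (e : Sym2 (Fin 6))))
  | .inr _, .inr _ => .isFalse fun h => h

def eps : Fin 15 → Fin 6 × Fin 6 :=
  ![(0,1),(0,2),(0,3),(0,4),(0,5),(1,2),(1,3),(1,4),(1,5),(2,3),(2,4),(2,5),(3,4),(3,5),(4,5)]

lemma heps : ∀ k : Fin 15, (eps k).1 ≠ (eps k).2 := by decide

def fι (i : Fin 21) : Fin 6 ⊕ (⊤ : SimpleGraph (Fin 6)).edgeSet :=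
  if h : (i : ℕ) < 6 then .inl ⟨i, h⟩
  else .inr ⟨s((eps ⟨i - 6, by omega⟩).1, (eps ⟨i - 6, by omega⟩).2),
    (SimpleGraph.mem_edgeSet _).mpr (heps _)⟩

lemma fι_inj : Function.Injective fι := by
  have : ∀ i j : Fin 21, fι i = fι j → i = j := by decide
  exact fun i j h => this i j h

lemma sym2_surj : ∀ a b : Fin 6, a ≠ b →
    ∃ k : Fin 15, s((eps k).1, (eps k).2) = s(a, b) := by decide

lemma fι_surj : Function.Surjective fι := by
  rintro (v | ⟨x, hx⟩)
  · exact ⟨⟨v.1, by omega⟩, by simp [fι]⟩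
  · induction x using Sym2.ind with
  | _ a b =>
    obtain ⟨k, hk⟩ := sym2_surj a b ((SimpleGraph.top_adj _ _).mp ((SimpleGraph.mem_edgeSet _).mp hx))
    refine ⟨⟨k.1 + 6, by omega⟩, ?_⟩
    have h6 : ¬ ((⟨k.1 + 6, by omega⟩ : Fin 21) : ℕ) < 6 := by simp
    simp only [fι, dif_neg h6]
    congr 1
    apply Subtype.ext
    simpa using (show s((eps ⟨k.1 + 6 - 6, by omega⟩).1, (eps ⟨k.1 + 6 - 6, by omega⟩).2) = s(a,b) by
      have : (⟨k.1 + 6 - 6, by omega⟩ : Fin 15) = k := by ext; simp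
      rw [this]; exact hk)

noncomputable def ψ : Fin 21 ≃ (Fin 6 ⊕ (⊤ : SimpleGraph (Fin 6)).edgeSet) :=
  Equiv.ofBijective fι ⟨fι_inj, fι_surj⟩

lemma adj_iff : ∀ i j : Fin 21,
    G21.Adj i j ↔ (subdiv (⊤ : SimpleGraph (Fin 6))).Adj (ψ i) (ψ j) := by
  decide

lemma deg_G21 (i : Fin 21) : deg G21 i = (if (i : ℕ) < 6 then 5 else 2) := by
  have key : ∀ i : Fin 21, (Finset.univ.filter (G21.Adj i)).card = (if (i : ℕ) < 6 then 5 else 2) := by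
    decide
  have h : {v | G21.Adj i v} = ↑(Finset.univ.filter (G21.Adj i)) := by ext v; simp
  show Nat.card {v | G21.Adj i v} = _
  rw [h, Nat.card_coe_set_eq, Set.ncard_coe_finset]
  exact key i

lemma deg_subdiv (i : Fin 21) : deg (subdiv (⊤ : SimpleGraph (Fin 6))) (ψ i) = deg G21 i := by
  unfold deg
  exact (Nat.card_congr (Equiv.subtypeEquiv ψ (fun j => adj_iff i j))).symm

lemma lap_transfer :
    stdLap (subdiv (⊤ : SimpleGraph (Fin 6))) = Matrix.reindex ψ ψ (stdLap G21) := by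
  ext u v
  obtain ⟨i, rfl⟩ := ψ.surjective u
  obtain ⟨j, rfl⟩ := ψ.surjective v
  simp only [Matrix.reindex_apply, Matrix.submatrix_apply, Equiv.symm_apply_apply]
  unfold stdLap
  rw [deg_subdiv i, deg_subdiv j]
  rcases eq_or_ne i j with rfl | hij
  · rw [if_pos rfl, if_pos rfl]
  · rw [if_neg (fun h => hij (ψ.injective h)), if_neg hij]
    by_cases ha : G21.Adj i j
    · rw [if_pos ((adj_iff i j).mp ha), if_pos ha]
    · rw [if_neg (fun h => ha ((adj_iff i j).mpr h)), if_neg ha]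

/-! ### Integer matrix identities -/

lemma h1 : Amat * Pz = Pz * Matrix.diagonal D0 + (10:ℤ) • (Po * Matrix.diagonal D1) := by decide

lemma h2 : Amat * Po = Pz * Matrix.diagonal D1 + Po * Matrix.diagonal D0 := by decide

lemma h3 : Pzᵀ * Po + Poᵀ * Pz = 0 := by decide

lemma h4 : Pzᵀ * Pz + (10:ℤ) • (Poᵀ * Po) = Matrix.diagonal Nvec := by decide

lemma hNpos : ∀ i, (0:ℤ) < Nvec i := by decide

/-! ### Real matrices -/

noncomputable section Real

open Matrix Polynomial

abbrev φ : Matrix (Fin 21) (Fin 21) ℤ →+* Matrix (Fin 21) (Fin 21) ℝ :=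
  (Int.castRingHom ℝ).mapMatrix

def PR : Matrix (Fin 21) (Fin 21) ℝ := φ Pz + Real.sqrt 10 • φ Po

def QR : Matrix (Fin 21) (Fin 21) ℝ :=
  Matrix.diagonal (fun i => ((Nvec i : ℝ))⁻¹) * PRᵀ

def dmu : Fin 21 → ℝ := fun i => (D0 i : ℝ) + Real.sqrt 10 * (D1 i : ℝ)

def Dl : Fin 21 → ℝ := fun i =>
  if i.1 = 0 then 0 else if i.1 ≤ 5 then 1 - Real.sqrt (2/5) else if i.1 ≤ 14 then 1
  else if i.1 ≤ 19 then 1 + Real.sqrt (2/5) else 2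

lemma sqrt10_pos : (0:ℝ) < Real.sqrt 10 := Real.sqrt_pos.mpr (by norm_num)

lemma sqrt10_sq : Real.sqrt 10 * Real.sqrt 10 = 10 := Real.mul_self_sqrt (by norm_num)

lemma hsq : Real.sqrt (2/5) = 2 * (Real.sqrt 10)⁻¹ := by
  rw [show (2/5:ℝ) = (2 * (Real.sqrt 10)⁻¹)^2 by
    have h := sqrt10_sq
    field_simp
    nlinarith [sqrt10_pos]]
  exact Real.sqrt_sq (by positivity)

lemma smul_int (M : Matrix (Fin 21) (Fin 21) ℝ) : (10:ℤ) • M = (10:ℝ) • M := by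
  rw [← Int.cast_smul_eq_zsmul ℝ]; norm_num

lemma hdiagmu : Matrix.diagonal dmu
    = φ (Matrix.diagonal D0) + Real.sqrt 10 • φ (Matrix.diagonal D1) := by
  ext i j
  rcases eq_or_ne i j with rfl | hij
  · simp [Matrix.diagonal_apply_eq, RingHom.mapMatrix_apply, Matrix.map_apply, dmu]
  · simp [Matrix.diagonal_apply_ne _ hij, RingHom.mapMatrix_apply, Matrix.map_apply]

lemma key : φ Amat * PR = PR * Matrix.diagonal dmu := by
  rw [hdiagmu]
  have e1 : φ Amat * φ Pz
      = φ Pz * φ (Matrix.diagonal D0) + (10:ℝ) • (φ Po * φ (Matrix.diagonal D1)) := by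
    rw [← _root_.map_mul, h1, _root_.map_add, map_zsmul, ← _root_.map_mul, ← _root_.map_mul,
      smul_int]
  have e2 : φ Amat * φ Po = φ Pz * φ (Matrix.diagonal D1) + φ Po * φ (Matrix.diagonal D0) := by
    rw [← _root_.map_mul, h2, _root_.map_add, ← _root_.map_mul, ← _root_.map_mul]
  have expand : PR * (φ (Matrix.diagonal D0) + Real.sqrt 10 • φ (Matrix.diagonal D1))
      = (φ Pz * φ (Matrix.diagonal D0) + (10:ℝ) • (φ Po * φ (Matrix.diagonal D1)))
        + Real.sqrt 10 • (φ Pz * φ (Matrix.diagonal D1) + φ Po * φ (Matrix.diagonal D0)) := by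
    rw [PR]
    simp only [Matrix.mul_add, Matrix.add_mul, Matrix.mul_smul, Matrix.smul_mul, smul_add,
      smul_smul, sqrt10_sq]
    module
  rw [expand, PR, Matrix.mul_add, Matrix.mul_smul, e1, e2]

lemma hPtP : PRᵀ * PR = Matrix.diagonal (fun i => (Nvec i : ℝ)) := by
  have htr : ∀ M : Matrix (Fin 21) (Fin 21) ℤ, (φ M)ᵀ = φ Mᵀ := by
    intro M
    simp [RingHom.mapMatrix_apply, Matrix.transpose_map]
  have e3 : φ Pzᵀ * φ Po + φ Poᵀ * φ Pz = 0 := by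
    rw [← _root_.map_mul, ← _root_.map_mul, ← _root_.map_add, h3, map_zero]
  have e4 : φ Pzᵀ * φ Pz + (10:ℝ) • (φ Poᵀ * φ Po) = Matrix.diagonal (fun i => (Nvec i : ℝ)) := by
    rw [← smul_int, ← _root_.map_mul, ← _root_.map_mul, ← map_zsmul, ← _root_.map_add, h4,
      RingHom.mapMatrix_apply]
    ext i j
    rcases eq_or_ne i j with rfl | hij
    · simp
    · simp [Matrix.diagonal_apply_ne _ hij]
  have expand : PRᵀ * PR
      = (φ Pzᵀ * φ Pz + (10:ℝ) • (φ Poᵀ * φ Po))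
        + Real.sqrt 10 • (φ Pzᵀ * φ Po + φ Poᵀ * φ Pz) := by
    rw [PR, Matrix.transpose_add, Matrix.transpose_smul, htr, htr]
    simp only [Matrix.mul_add, Matrix.add_mul, Matrix.mul_smul, Matrix.smul_mul, smul_add,
      smul_smul, sqrt10_sq]
    module
  rw [expand, e3, smul_zero, add_zero, e4]

lemma hQP : QR * PR = 1 := by
  rw [QR, Matrix.mul_assoc, hPtP, Matrix.diagonal_mul_diagonal]
  have : (fun i => ((Nvec i : ℝ))⁻¹ * (Nvec i : ℝ)) = fun _ => (1:ℝ) := by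
    funext i
    exact inv_mul_cancel₀ (by exact_mod_cast (hNpos i).ne')
  rw [this, Matrix.diagonal_one]

lemma hPQ : PR * QR = 1 := mul_eq_one_comm.mp hQP

lemma stdLapG21_eq : stdLap G21 = 1 - (Real.sqrt 10)⁻¹ • φ Amat := by
  have hdiag : ∀ i, Amat i i = 0 := by decide
  have hval : ∀ i j, Amat i j = 0 ∨ Amat i j = 1 := by intro i; fin_cases i <;> decide
  have hdeg : ∀ i j : Fin 21, Amat i j = 1 →
      ((if (i : ℕ) < 6 then 5 else 2) * (if (j : ℕ) < 6 then 5 else 2) : ℕ) = 10 := by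
      intro i; fin_cases i <;> decide
  ext i j
  unfold stdLap
  simp only [Matrix.sub_apply, Matrix.smul_apply, RingHom.mapMatrix_apply, Matrix.map_apply,
    smul_eq_mul]
  rcases eq_or_ne i j with rfl | hij
  · rw [if_pos rfl, Matrix.one_apply_eq, hdiag i]
    norm_num
  · rw [if_neg hij, Matrix.one_apply_ne hij]
    by_cases ha : G21.Adj i j
    · rw [if_pos ha]
      have h1 : Amat i j = 1 := ha
      have h10 : ((deg G21 i : ℝ) * (deg G21 j : ℝ)) = 10 := by
        rw [deg_G21 i, deg_G21 j]
        exact_mod_cast congrArg (Nat.cast : ℕ → ℝ) (hdeg i j h1)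
      rw [h10, h1]
      push_cast
      rw [one_div]
      simp
    · rw [if_neg ha]
      have h0 : Amat i j = 0 := (hval i j).resolve_right ha
      rw [h0]
      norm_num

lemma hDl_diag : Matrix.diagonal Dl = 1 - (Real.sqrt 10)⁻¹ • Matrix.diagonal dmu := by
  have hs : Real.sqrt 10 ≠ 0 := sqrt10_pos.ne'
  ext i j
  rcases eq_or_ne i j with rfl | hij
  · simp only [Matrix.diagonal_apply_eq, Matrix.sub_apply, Matrix.one_apply_eq,
      Matrix.smul_apply, smul_eq_mul]
    have hlt := i.isLt
    unfold Dl dmu D0 D1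
    rw [hsq]
    split_ifs <;> first
      | omega
      | (push_cast; field_simp; try ring)
  · simp [Matrix.diagonal_apply_ne _ hij, Matrix.one_apply_ne hij]

lemma conj : stdLap G21 = PR * Matrix.diagonal Dl * QR := by
  have h5 : stdLap G21 * PR = PR * Matrix.diagonal Dl := by
    rw [stdLapG21_eq, hDl_diag, Matrix.sub_mul, Matrix.one_mul, Matrix.smul_mul, key,
      Matrix.mul_sub, Matrix.mul_one, Matrix.mul_smul]
  calc stdLap G21 = stdLap G21 * (PR * QR) := by rw [hPQ, Matrix.mul_one]
    _ = stdLap G21 * PR * QR := by rw [Matrix.mul_assoc]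
    _ = PR * Matrix.diagonal Dl * QR := by rw [h5]

/-! ### Characteristic polynomial of a conjugate -/

lemma charpoly_conj {n : Type*} [Fintype n] [DecidableEq n] {R : Type*} [CommRing R]
    (P M Q : Matrix n n R) (hPQ : P * Q = 1) : (P * M * Q).charpoly = M.charpoly := by
  set f : Matrix n n R →+* Matrix n n R[X] := (Polynomial.C : R →+* R[X]).mapMatrix with hf
  have hmap : f P * f Q = 1 := by rw [← _root_.map_mul, hPQ, _root_.map_one]
  have hcm : Matrix.charmatrix (P * M * Q) = f P * Matrix.charmatrix M * f Q := by
    unfold Matrix.charmatrix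
    rw [Matrix.mul_sub, Matrix.sub_mul]
    congr 1
    · have hc := Matrix.scalar_commute (X : R[X]) (fun r => Commute.all _ _) (f P)
      rw [← hc, Matrix.mul_assoc, hmap, Matrix.mul_one]
    · rw [_root_.map_mul, _root_.map_mul]
  rw [Matrix.charpoly, Matrix.charpoly, hcm, Matrix.det_mul, Matrix.det_mul]
  have hdet : (f P).det * (f Q).det = 1 := by rw [← Matrix.det_mul, hmap, Matrix.det_one]
  calc (f P).det * (Matrix.charmatrix M).det * (f Q).det
      = (Matrix.charmatrix M).det * ((f P).det * (f Q).det) := by ring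
    _ = (Matrix.charmatrix M).det := by rw [hdet, mul_one]

lemma spec_eq : spec (subdiv (⊤ : SimpleGraph (Fin 6))) = (Matrix.diagonal Dl).charpoly.roots := by
  have h2 : (stdLap G21).charpoly = (Matrix.diagonal Dl).charpoly := by
    rw [conj, charpoly_conj _ _ _ hPQ]
  have h3 : (Matrix.reindex ψ ψ (stdLap G21)).charpoly = (Matrix.diagonal Dl).charpoly :=
    (Matrix.charpoly_reindex ψ _).trans h2
  unfold spec
  rw [lap_transfer]
  refine congrArg Polynomial.roots ?_
  convert h3 using 2

lemma charpoly_diag : (Matrix.diagonal Dl).charpoly = ∏ i : Fin 21, (X - C (Dl i)) := by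
  rw [Matrix.charpoly_of_upperTriangular _ (Matrix.blockTriangular_diagonal (b := id) Dl)]
  exact Finset.prod_congr rfl fun i _ => by rw [Matrix.diagonal_apply_eq]

lemma roots_diag : (Matrix.diagonal Dl).charpoly.roots = Finset.univ.val.map Dl := by
  rw [charpoly_diag]
  have : ∏ i : Fin 21, (X - C (Dl i))
      = ((Finset.univ.val.map Dl).map (fun a : ℝ => X - C a)).prod := by
    rw [Multiset.map_map]
    rfl
  rw [this, roots_multiset_prod_X_sub_C]

lemma val_map : (Finset.univ.val.map Dl : Multiset ℝ)
    = ↑(([(0:ℝ)] ++ List.replicate 5 (1 - Real.sqrt (2/5)) ++ List.replicate 9 (1:ℝ)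
        ++ List.replicate 5 (1 + Real.sqrt (2/5)) ++ [(2:ℝ)])) := by
  have huniv : (Finset.univ.val : Multiset (Fin 21)) = ↑(List.finRange 21) := rfl
  have hfr : List.finRange 21 = [⟨0, by omega⟩, ⟨1, by omega⟩, ⟨2, by omega⟩, ⟨3, by omega⟩, ⟨4, by omega⟩, ⟨5, by omega⟩, ⟨6, by omega⟩, ⟨7, by omega⟩, ⟨8, by omega⟩, ⟨9, by omega⟩, ⟨10, by omega⟩, ⟨11, by omega⟩, ⟨12, by omega⟩, ⟨13, by omega⟩, ⟨14, by omega⟩, ⟨15, by omega⟩, ⟨16, by omega⟩, ⟨17, by omega⟩, ⟨18, by omega⟩, ⟨19, by omega⟩, ⟨20, by omega⟩] := by decide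
  rw [huniv, Multiset.map_coe, hfr]
  simp only [List.map]
  norm_num [Dl, List.replicate]

end Real

end Stmt17Aux

/-- the spectrum of the standard Laplacian of the subdivision
graph `S(K_6)` of the complete graph `K_6`. -/
theorem stmt_17 :
    spec (subdiv (⊤ : SimpleGraph (Fin 6))) =
      {(0 : ℝ)}
        + 5 • {1 - Real.sqrt (2/5)}
        + 9 • {(1 : ℝ)}
        + 5 • {1 + Real.sqrt (2/5)}
        + {(2 : ℝ)} := by
  rw [Stmt17Aux.spec_eq, Stmt17Aux.roots_diag, Stmt17Aux.val_map]
  have hrep : ∀ (n : ℕ) (a : ℝ), (n • ({a} : Multiset ℝ)) = ↑(List.replicate n a) := by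
    intro n a; rw [Multiset.nsmul_singleton, ← Multiset.coe_replicate]
  rw [hrep, hrep, hrep,
    show ({(0:ℝ)} : Multiset ℝ) = ↑[(0:ℝ)] from rfl,
    show ({(2:ℝ)} : Multiset ℝ) = ↑[(2:ℝ)] from rfl,
    ← Multiset.coe_add, ← Multiset.coe_add, ← Multiset.coe_add, ← Multiset.coe_add]
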